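/- arXiv:2109.10171 — 3 statements merged into one kernel-verified Lean document; each statement's English description precedes it below -/
import Mathlib

section
/- Theorem (iterated eigenvalues for generalized ladder operators): Assume H₀ is self-adjoint, [H₀,Z] = λ·Z[Z†,Z] with λ real, [H₀, Z†Z] = 0, all eigenvalues of H₀ have one-dimensional eigenspaces, and H₀Φ = EΦ with Φ ≠ 0. Define Φₙ := ZⁿΦ. Then for every n with Φₙ ≠ 0: Φₙ is an eigenvector of the commutator [Z†,Z] with some real eigenvalue μₙ, and H₀Φₙ = (E + λ·(μ₀ + μ₁ + ... + μ_{n-1}))·Φₙ. -/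
open ContinuousLinearMap

theorem stmt_13 {E : Type*} [NormedAddCommGroup E] [InnerProductSpace ℂ E] [CompleteSpace E]
    (H₀ Z : E →L[ℂ] E) (l : ℝ) (En : ℂ) (Φ : E) (hΦ : Φ ≠ 0)
    (hsa : IsSelfAdjoint H₀)
    (hcomm : H₀ ∘L Z - Z ∘L H₀ =
      (l : ℂ) • (Z ∘L (adjoint Z ∘L Z - Z ∘L adjoint Z)))
    (hcomm2 : H₀ ∘L (adjoint Z ∘L Z) = (adjoint Z ∘L Z) ∘L H₀)
    (hsimple : ∀ (c : ℂ) (v w : E), H₀ v = c • v → H₀ w = c • w → v ≠ 0 →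
      ∃ t : ℂ, w = t • v)
    (heig : H₀ Φ = En • Φ) :
    ∀ n : ℕ, (Z ^ n) Φ ≠ 0 →
      ((adjoint Z ∘L Z - Z ∘L adjoint Z) ((Z ^ n) Φ) =
        ((inner ℂ ((Z ^ n) Φ) ((adjoint Z ∘L Z - Z ∘L adjoint Z) ((Z ^ n) Φ)) : ℂ) /
          (‖(Z ^ n) Φ‖ ^ 2 : ℂ)) • (Z ^ n) Φ) ∧
      ((inner ℂ ((Z ^ n) Φ) ((adjoint Z ∘L Z - Z ∘L adjoint Z) ((Z ^ n) Φ)) : ℂ) /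
          (‖(Z ^ n) Φ‖ ^ 2 : ℂ)).im = 0 ∧
      H₀ ((Z ^ n) Φ) =
        (En + (l : ℂ) * ∑ k ∈ Finset.range n,
          ((inner ℂ ((Z ^ k) Φ) ((adjoint Z ∘L Z - Z ∘L adjoint Z) ((Z ^ k) Φ)) : ℂ) /
            (‖(Z ^ k) Φ‖ ^ 2 : ℂ))) • (Z ^ n) Φ := by
  set C : E →L[ℂ] E := adjoint Z ∘L Z - Z ∘L adjoint Z with hCdef
  have hH : adjoint H₀ = H₀ := hsa.adjoint_eq
  have hCadj : adjoint C = C := by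
    rw [hCdef, map_sub, adjoint_comp, adjoint_comp, adjoint_adjoint]
  -- pointwise version of hcomm
  have hc1 : ∀ v : E, H₀ (Z v) = Z (H₀ v) + (l : ℂ) • Z (C v) := by
    intro v
    have h := ContinuousLinearMap.ext_iff.mp hcomm v
    simp only [sub_apply, comp_apply, smul_apply, ← hCdef] at h
    linear_combination (norm := module) h
  -- adjoint relation
  have hadj : H₀ ∘L adjoint Z - adjoint Z ∘L H₀ = -((l : ℂ) • (C ∘L adjoint Z)) := by
    have h := congrArg adjoint hcomm
    rw [map_sub, adjoint_comp, adjoint_comp, hH, map_smulₛₗ, adjoint_comp, hCadj] at h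
    rw [Complex.conj_ofReal] at h
    rw [← h]
    abel
  have hc2 : ∀ v : E, H₀ (adjoint Z v) = adjoint Z (H₀ v) - (l : ℂ) • C (adjoint Z v) := by
    intro v
    have h := ContinuousLinearMap.ext_iff.mp hadj v
    simp only [sub_apply, comp_apply, smul_apply, neg_apply] at h
    linear_combination (norm := module) h
  have hc2' : ∀ v : E, H₀ (adjoint Z (Z v)) = adjoint Z (Z (H₀ v)) := by
    intro v
    have h := ContinuousLinearMap.ext_iff.mp hcomm2 v
    simpa only [comp_apply] using h
  -- H₀ commutes with Z Z†
  have hZZ : ∀ v : E, H₀ (Z (adjoint Z v)) = Z (adjoint Z (H₀ v)) := by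
    intro v
    rw [hc1 (adjoint Z v), hc2 v, map_sub, map_smul]
    abel
  -- H₀ commutes with C
  have hHC : ∀ v : E, H₀ (C v) = C (H₀ v) := by
    intro v
    have hCapp : ∀ w : E, C w = adjoint Z (Z w) - Z (adjoint Z w) := by
      intro w; rw [hCdef]; simp [sub_apply, comp_apply]
    rw [hCapp v, hCapp (H₀ v), map_sub, hc2' v, hZZ v]
  -- key lemma: eigenvectors of H₀ are eigenvectors of C with real eigenvalue
  have lemA : ∀ (c : ℂ) (v : E), v ≠ 0 → H₀ v = c • v →
      C v = ((inner ℂ v (C v) : ℂ) / (‖v‖ ^ 2 : ℂ)) • v ∧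
        ((inner ℂ v (C v) : ℂ) / (‖v‖ ^ 2 : ℂ)).im = 0 := by
    intro c v hv hev
    have hCv : H₀ (C v) = c • C v := by rw [hHC v, hev, map_smul]
    obtain ⟨t, ht⟩ := hsimple c v (C v) hev hCv hv
    have hnorm : (‖v‖ ^ 2 : ℂ) ≠ 0 :=
      pow_ne_zero 2 (Complex.ofReal_ne_zero.mpr (norm_ne_zero_iff.mpr hv))
    have hinner : (inner ℂ v (C v) : ℂ) = t * (‖v‖ ^ 2 : ℂ) := by
      rw [ht, inner_smul_right, inner_self_eq_norm_sq_to_K]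
      norm_cast
    have hq : (inner ℂ v (C v) : ℂ) / (‖v‖ ^ 2 : ℂ) = t := by
      rw [hinner, mul_div_assoc, div_self hnorm, mul_one]
    have hsym : (inner ℂ (C v) v : ℂ) = inner ℂ v (C v) := by
      nth_rewrite 1 [← hCadj]
      exact adjoint_inner_left C v v
    have hinner2 : (inner ℂ (C v) v : ℂ) = (starRingEnd ℂ) t * (‖v‖ ^ 2 : ℂ) := by
      rw [ht, inner_smul_left, inner_self_eq_norm_sq_to_K]
      norm_cast
    have hconj : (starRingEnd ℂ) t = t := by
      have := hinner2.symm.trans (hsym.trans hinner)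
      exact mul_right_cancel₀ hnorm this
    refine ⟨by rw [hq, ht], ?_⟩
    rw [hq]
    exact Complex.conj_eq_iff_im.mp hconj
  -- main induction
  have main : ∀ n : ℕ, (Z ^ n) Φ ≠ 0 →
      H₀ ((Z ^ n) Φ) = (En + (l : ℂ) * ∑ k ∈ Finset.range n,
        ((inner ℂ ((Z ^ k) Φ) (C ((Z ^ k) Φ)) : ℂ) / (‖(Z ^ k) Φ‖ ^ 2 : ℂ))) • (Z ^ n) Φ := by
    intro n
    induction n with
    | zero => intro _; simpa using heig
    | succ n ih =>
      intro hn
      have hpow : (Z ^ (n + 1)) Φ = Z ((Z ^ n) Φ) := by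
        rw [pow_succ', ContinuousLinearMap.mul_apply]
      have hn' : (Z ^ n) Φ ≠ 0 := by
        intro h
        apply hn
        rw [hpow, h, map_zero]
      have hE := ih hn'
      obtain ⟨hCeig, _⟩ := lemA _ _ hn' hE
      rw [hpow, hc1 ((Z ^ n) Φ), hE, hCeig, map_smul, map_smul, Finset.sum_range_succ,
        smul_smul, ← add_smul]
      congr 1
      ring
  intro n hn
  obtain ⟨h1, h2⟩ := lemA _ _ hn (main n hn)
  exact ⟨h1, h2, main n hn⟩
end

section
/- Under the hypotheses of the previous theorem, each nonzero Φₙ = ZⁿΦ is also an eigenvector of ZZ† with eigenvalue αₙ = ‖Z†Φₙ‖²/‖Φₙ‖² and of Z†Z with eigenvalue βₙ = ‖ZΦₙ‖²/‖Φₙ‖², and μₙ = βₙ - αₙ. -/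
open ContinuousLinearMap

-- key commutation: H₀ commutes with Z Z†
lemma aux_key {E : Type*} [NormedAddCommGroup E] [InnerProductSpace ℂ E] [CompleteSpace E]
    (H₀ Z : E →L[ℂ] E) (l : ℝ)
    (hsa : IsSelfAdjoint H₀)
    (hcomm : H₀ ∘L Z - Z ∘L H₀ =
      (l : ℂ) • (Z ∘L (adjoint Z ∘L Z - Z ∘L adjoint Z))) :
    H₀ * (Z * adjoint Z) = (Z * adjoint Z) * H₀ := by
  set W := adjoint Z with hW
  have h1 : H₀ * Z - Z * H₀ = (l : ℂ) • (Z * (W * Z - Z * W)) := hcomm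
  have h1adj : W * H₀ - H₀ * W = (l : ℂ) • ((W * Z - Z * W) * W) := by
    have := congrArg star h1
    simp only [star_sub, star_mul, star_smul, hsa.star_eq, Complex.star_def,
      Complex.conj_ofReal] at this
    have hWs : star Z = W := rfl
    have hZs : star W = Z := by rw [hW, star_eq_adjoint, adjoint_adjoint]
    rw [hWs, hZs] at this
    linear_combination (norm := noncomm_ring) this
  have e1 : H₀ * Z = Z * H₀ + (l : ℂ) • (Z * (W * Z - Z * W)) := by
    linear_combination (norm := noncomm_ring) h1
  have e2 : H₀ * W = W * H₀ - (l : ℂ) • ((W * Z - Z * W) * W) := by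
    linear_combination (norm := noncomm_ring) -h1adj
  calc H₀ * (Z * W) = (H₀ * Z) * W := by rw [mul_assoc]
    _ = (Z * H₀ + (l : ℂ) • (Z * (W * Z - Z * W))) * W := by rw [e1]
    _ = Z * (H₀ * W) + (l : ℂ) • (Z * ((W * Z - Z * W) * W)) := by
        simp only [add_mul, smul_mul_assoc, mul_assoc]
    _ = Z * (W * H₀ - (l : ℂ) • ((W * Z - Z * W) * W))
        + (l : ℂ) • (Z * ((W * Z - Z * W) * W)) := by rw [e2]
    _ = (Z * W) * H₀ := by
        simp only [mul_sub, mul_smul_comm, mul_assoc]; abel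

-- every Φₙ is an H₀-eigenvector (trivially if zero)
lemma aux_eig {E : Type*} [NormedAddCommGroup E] [InnerProductSpace ℂ E] [CompleteSpace E]
    (H₀ Z : E →L[ℂ] E) (l : ℝ) (En : ℂ) (Φ : E)
    (hsa : IsSelfAdjoint H₀)
    (hcomm : H₀ ∘L Z - Z ∘L H₀ =
      (l : ℂ) • (Z ∘L (adjoint Z ∘L Z - Z ∘L adjoint Z)))
    (hcomm2 : H₀ ∘L (adjoint Z ∘L Z) = (adjoint Z ∘L Z) ∘L H₀)
    (hsimple : ∀ (c : ℂ) (v w : E), H₀ v = c • v → H₀ w = c • w → v ≠ 0 →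
      ∃ t : ℂ, w = t • v)
    (heig : H₀ Φ = En • Φ) :
    ∀ n : ℕ, ∃ c : ℂ, H₀ ((Z ^ n) Φ) = c • (Z ^ n) Φ := by
  have key := aux_key H₀ Z l hsa hcomm
  intro n
  induction n with
  | zero => exact ⟨En, by simpa using heig⟩
  | succ n ih =>
    obtain ⟨c, hc⟩ := ih
    set ψ := (Z ^ n) Φ with hψ
    have hstep : (Z ^ (n + 1)) Φ = Z ψ := by rw [pow_succ', mul_apply_eq_comp]
    by_cases h0 : ψ = 0
    · exact ⟨0, by rw [hstep, h0]; simp⟩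
    · -- W Z ψ and Z W ψ are H₀-eigenvectors for c
      have hWZ : H₀ ((adjoint Z ∘L Z) ψ) = c • (adjoint Z ∘L Z) ψ := by
        have := congrArg (fun A => A ψ) hcomm2
        simp only [comp_apply] at this ⊢
        rw [← comp_apply, ← comp_apply] at this
        calc H₀ ((adjoint Z) (Z ψ)) = (adjoint Z) (Z (H₀ ψ)) := by
              have := congrArg (fun A => A ψ) hcomm2
              simpa [comp_apply] using this
          _ = c • (adjoint Z) (Z ψ) := by rw [hc]; simp
      have hZW : H₀ ((Z ∘L adjoint Z) ψ) = c • (Z ∘L adjoint Z) ψ := by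
        have := congrArg (fun A => A ψ) key
        simp only [mul_apply_eq_comp] at this
        calc H₀ ((Z ∘L adjoint Z) ψ) = Z ((adjoint Z) (H₀ ψ)) := by
              simpa [comp_apply] using this
          _ = c • (Z ∘L adjoint Z) ψ := by rw [hc]; simp
      obtain ⟨s, hs⟩ := hsimple c ψ ((adjoint Z ∘L Z) ψ) hc hWZ h0
      obtain ⟨t, ht⟩ := hsimple c ψ ((Z ∘L adjoint Z) ψ) hc hZW h0
      refine ⟨c + l * (s - t), ?_⟩
      have hZψ : H₀ (Z ψ) = c • Z ψ + (l : ℂ) • (Z ((s - t) • ψ)) := by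
        have := congrArg (fun A => A ψ) hcomm
        simp only [sub_apply, comp_apply, smul_apply] at this
        have h2 : (adjoint Z ∘L Z - Z ∘L adjoint Z) ψ = (s - t) • ψ := by
          simp only [sub_apply, comp_apply] at hs ht ⊢
          rw [hs, ht, sub_smul]
        simp only [sub_apply, comp_apply] at h2
        rw [h2] at this
        have : H₀ (Z ψ) = Z (H₀ ψ) + (l : ℂ) • Z ((s - t) • ψ) := by
          linear_combination (norm := module) this
        rw [this, hc]; simp
      rw [hstep, hZψ]
      simp only [map_smul, smul_smul]
      rw [← add_smul]

theorem stmt_14 {E : Type*} [NormedAddCommGroup E] [InnerProductSpace ℂ E] [CompleteSpace E]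
    (H₀ Z : E →L[ℂ] E) (l : ℝ) (En : ℂ) (Φ : E) (hΦ : Φ ≠ 0)
    (hsa : IsSelfAdjoint H₀)
    (hcomm : H₀ ∘L Z - Z ∘L H₀ =
      (l : ℂ) • (Z ∘L (adjoint Z ∘L Z - Z ∘L adjoint Z)))
    (hcomm2 : H₀ ∘L (adjoint Z ∘L Z) = (adjoint Z ∘L Z) ∘L H₀)
    (hsimple : ∀ (c : ℂ) (v w : E), H₀ v = c • v → H₀ w = c • w → v ≠ 0 →
      ∃ t : ℂ, w = t • v)
    (heig : H₀ Φ = En • Φ) :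
    ∀ n : ℕ, (Z ^ n) Φ ≠ 0 →
      ((Z ∘L adjoint Z) ((Z ^ n) Φ) =
        ((‖(adjoint Z) ((Z ^ n) Φ)‖ ^ 2 / ‖(Z ^ n) Φ‖ ^ 2 : ℝ) : ℂ) • (Z ^ n) Φ) ∧
      ((adjoint Z ∘L Z) ((Z ^ n) Φ) =
        ((‖Z ((Z ^ n) Φ)‖ ^ 2 / ‖(Z ^ n) Φ‖ ^ 2 : ℝ) : ℂ) • (Z ^ n) Φ) ∧
      ((adjoint Z ∘L Z - Z ∘L adjoint Z) ((Z ^ n) Φ) =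
        (((‖Z ((Z ^ n) Φ)‖ ^ 2 / ‖(Z ^ n) Φ‖ ^ 2
          - ‖(adjoint Z) ((Z ^ n) Φ)‖ ^ 2 / ‖(Z ^ n) Φ‖ ^ 2 : ℝ)) : ℂ) • (Z ^ n) Φ) := by
  have key := aux_key H₀ Z l hsa hcomm
  intro n hn
  obtain ⟨c, hc⟩ := aux_eig H₀ Z l En Φ hsa hcomm hcomm2 hsimple heig n
  set ψ := (Z ^ n) Φ with hψ
  have hWZ : H₀ ((adjoint Z ∘L Z) ψ) = c • (adjoint Z ∘L Z) ψ := by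
    have := congrArg (fun A => A ψ) hcomm2
    calc H₀ ((adjoint Z ∘L Z) ψ) = (adjoint Z ∘L Z) (H₀ ψ) := by
          simpa [comp_apply] using this
      _ = c • (adjoint Z ∘L Z) ψ := by rw [hc]; simp
  have hZW : H₀ ((Z ∘L adjoint Z) ψ) = c • (Z ∘L adjoint Z) ψ := by
    have := congrArg (fun A => A ψ) key
    simp only [mul_apply_eq_comp] at this
    calc H₀ ((Z ∘L adjoint Z) ψ) = Z ((adjoint Z) (H₀ ψ)) := by
          simpa [comp_apply] using this
      _ = c • (Z ∘L adjoint Z) ψ := by rw [hc]; simp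
  obtain ⟨s, hs⟩ := hsimple c ψ ((adjoint Z ∘L Z) ψ) hc hWZ hn
  obtain ⟨t, ht⟩ := hsimple c ψ ((Z ∘L adjoint Z) ψ) hc hZW hn
  have hnorm : (‖ψ‖ : ℂ) ^ 2 ≠ 0 := by
    simp [hn, norm_eq_zero]
  -- compute s
  have hsval : s = ((‖Z ψ‖ ^ 2 / ‖ψ‖ ^ 2 : ℝ) : ℂ) := by
    have h1 : (inner ℂ ψ ((adjoint Z ∘L Z) ψ) : ℂ) = (‖Z ψ‖ : ℂ) ^ 2 := by
      rw [comp_apply, adjoint_inner_right, inner_self_eq_norm_sq_to_K]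
      norm_num
    have h2 : (inner ℂ ψ ((adjoint Z ∘L Z) ψ) : ℂ) = s * (‖ψ‖ : ℂ) ^ 2 := by
      rw [hs, inner_smul_right, inner_self_eq_norm_sq_to_K]
      norm_num
    rw [h1] at h2
    field_simp
    rw [Complex.ofReal_div, Complex.ofReal_pow, Complex.ofReal_pow, h2, mul_div_assoc, div_self hnorm, mul_one]
  have htval : t = ((‖(adjoint Z) ψ‖ ^ 2 / ‖ψ‖ ^ 2 : ℝ) : ℂ) := by
    have h1 : (inner ℂ ψ ((Z ∘L adjoint Z) ψ) : ℂ) = (‖(adjoint Z) ψ‖ : ℂ) ^ 2 := by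
      rw [comp_apply, ← adjoint_inner_left Z, inner_self_eq_norm_sq_to_K]
      norm_num
    have h2 : (inner ℂ ψ ((Z ∘L adjoint Z) ψ) : ℂ) = t * (‖ψ‖ : ℂ) ^ 2 := by
      rw [ht, inner_smul_right, inner_self_eq_norm_sq_to_K]
      norm_num
    rw [h1] at h2
    field_simp
    rw [Complex.ofReal_div, Complex.ofReal_pow, Complex.ofReal_pow, h2, mul_div_assoc, div_self hnorm, mul_one]
  refine ⟨htval ▸ ht, hsval ▸ hs, ?_⟩
  rw [sub_apply, hs, ht, hsval, htval, ← sub_smul]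
  push_cast
  ring_nf
end

section
/- Biorthogonality: Let H be a continuous linear operator on a complex Hilbert space with [H, Z_j] = λ_j Z_j, Hφ = Eφ, H†ψ = conj(E)ψ, and set φ_{j,n} := Z_jⁿφ, ψ_{l,m} := (Z_l†)ᵐψ. If n·λ_j ≠ -m·λ_l, then ⟨ψ_{l,m}, φ_{j,n}⟩ = 0. -/
open ContinuousLinearMap

lemma raise_aux {E : Type*} [NormedAddCommGroup E] [InnerProductSpace ℂ E]
    (H Z : E →L[ℂ] E) (lam : ℂ) (h : H ∘L Z - Z ∘L H = lam • Z)
    (E0 : ℂ) (φ : E) (hφ : H φ = E0 • φ) :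
    ∀ n : ℕ, H ((Z ^ n) φ) = (E0 + n * lam) • ((Z ^ n) φ) := by
  have hcomm : ∀ x : E, H (Z x) = Z (H x) + lam • Z x := by
    intro x
    have h' := congrArg (fun T : E →L[ℂ] E => T x) h
    simp only [sub_apply, comp_apply, smul_apply] at h'
    have : H (Z x) - Z (H x) = lam • Z x := h'
    linear_combination (norm := abel) this
  intro n
  induction n with
  | zero => simpa using hφ
  | succ n ih =>
    have hpow : (Z ^ (n + 1)) φ = Z ((Z ^ n) φ) := by
      rw [pow_succ']
      simp [mul_apply]
    rw [hpow, hcomm, ih, map_smul, ← add_smul]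
    push_cast
    ring_nf

theorem stmt_18 {E : Type*} [NormedAddCommGroup E] [InnerProductSpace ℂ E] [CompleteSpace E]
    {ι : Type*} (H : E →L[ℂ] E) (Z : ι → (E →L[ℂ] E)) (lam : ι → ℂ)
    (h : ∀ j, H ∘L Z j - Z j ∘L H = lam j • Z j)
    (En : ℂ) (φ ψ : E) (hφ : φ ≠ 0) (hψ : ψ ≠ 0)
    (heig : H φ = En • φ)
    (heig' : (adjoint H) ψ = (starRingEnd ℂ) En • ψ)
    (j l : ι) (n m : ℕ)
    (hne : (n : ℂ) * lam j ≠ -((m : ℂ) * lam l)) :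
    inner ℂ (((adjoint (Z l)) ^ m) ψ) ((Z j ^ n) φ) = (0 : ℂ) := by
  have h1 : H ((Z j ^ n) φ) = (En + n * lam j) • ((Z j ^ n) φ) :=
    raise_aux H (Z j) (lam j) (h j) En φ heig n
  have hadj : adjoint H ∘L adjoint (Z l) - adjoint (Z l) ∘L adjoint H
      = (-(starRingEnd ℂ (lam l))) • adjoint (Z l) := by
    have := congrArg adjoint (h l)
    rw [map_sub, adjoint_comp, adjoint_comp, ← star_eq_adjoint (lam l • Z l), star_smul,
      star_eq_adjoint] at this
    rw [← starRingEnd_apply] at this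
    linear_combination (norm := module) -this
  have h2 : adjoint H (((adjoint (Z l)) ^ m) ψ)
      = (starRingEnd ℂ En + m * (-(starRingEnd ℂ (lam l)))) • (((adjoint (Z l)) ^ m) ψ) :=
    raise_aux (adjoint H) (adjoint (Z l)) _ hadj _ ψ heig' m
  set x := ((adjoint (Z l)) ^ m) ψ
  set y := (Z j ^ n) φ
  have key : (inner ℂ (adjoint H x) y : ℂ) = inner ℂ x (H y) := adjoint_inner_left H y x
  rw [h1, h2, inner_smul_left, inner_smul_right] at key
  have hs : ((starRingEnd ℂ) (starRingEnd ℂ En + m * (-(starRingEnd ℂ (lam l)))) : ℂ)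
      = En - m * lam l := by
    simp [map_add, map_mul, map_neg, Complex.conj_conj]
    ring
  rw [hs] at key
  have hfac : ((n : ℂ) * lam j + m * lam l) * inner ℂ x y = 0 := by
    linear_combination -key
  rcases mul_eq_zero.mp hfac with h0 | h0
  · exact absurd (by linear_combination h0) hne
  · exact h0
end
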